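/- The Wick-ordered power of a Segal field satisfies :Φ(f)^n: = Σ_{k=0}^{[n/2]} (n!/(k!(n-2k)!)) Φ(f)^{n-2k} (−‖f‖²/4)^k on the finite particle subspace. -/

import Mathlib

open scoped ComplexInnerProductSpace

open Finset in
private noncomputable def Acoef (n k : ℕ) : ℂ :=
  (n.factorial : ℂ) / ((k.factorial : ℂ) * ((n - 2*k).factorial : ℂ))

private lemma Acoef_zero (n : ℕ) : Acoef n 0 = 1 := by
  simp [Acoef, Nat.factorial_ne_zero]

private lemma Acoef_rec (n k : ℕ) (h : 2*k+1 ≤ n) :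
    Acoef (n+2) (k+1) = Acoef (n+1) (k+1) + 2*((n:ℂ)+1)*Acoef n k := by
  obtain ⟨d, rfl⟩ : ∃ d, n = 2*k+1+d := ⟨n - (2*k+1), by omega⟩
  simp only [Acoef]
  have e1 : 2*k+1+d+2 - 2*(k+1) = d+1 := by omega
  have e2 : 2*k+1+d+1 - 2*(k+1) = d := by omega
  have e3 : 2*k+1+d - 2*k = d+1 := by omega
  rw [e1, e2, e3]
  have f1 : (2*k+1+d+2).factorial = (2*k+1+d+2) * ((2*k+1+d+1) * (2*k+1+d).factorial) := by
    rw [show 2*k+1+d+2 = ((2*k+1+d)+1)+1 from rfl, Nat.factorial_succ, Nat.factorial_succ]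
  have f2 : (2*k+1+d+1).factorial = (2*k+1+d+1) * (2*k+1+d).factorial := Nat.factorial_succ _
  have f3 : (k+1).factorial = (k+1) * k.factorial := Nat.factorial_succ _
  have f4 : (d+1).factorial = (d+1) * d.factorial := Nat.factorial_succ _
  rw [f1, f2, f3, f4]
  have hk : ((k.factorial : ℂ)) ≠ 0 := Nat.cast_ne_zero.mpr (Nat.factorial_ne_zero _)
  have hd : ((d.factorial : ℂ)) ≠ 0 := Nat.cast_ne_zero.mpr (Nat.factorial_ne_zero _)
  have ha : (((2*k+1+d).factorial : ℂ)) ≠ 0 := Nat.cast_ne_zero.mpr (Nat.factorial_ne_zero _)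
  have hk1 : ((k:ℂ)+1) ≠ 0 := Nat.cast_add_one_ne_zero k
  have hd1 : ((d:ℂ)+1) ≠ 0 := Nat.cast_add_one_ne_zero d
  push_cast
  field_simp
  ring

private lemma Acoef_top (m : ℕ) :
    Acoef (2*m+2) (m+1) = 2*(((2*m:ℕ):ℂ)+1)*Acoef (2*m) m := by
  simp only [Acoef]
  have e1 : 2*m+2 - 2*(m+1) = 0 := by omega
  have e2 : 2*m - 2*m = 0 := by omega
  rw [e1, e2]
  have f1 : (2*m+2).factorial = (2*m+2) * ((2*m+1) * (2*m).factorial) := by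
    rw [show 2*m+2 = ((2*m)+1)+1 from rfl, Nat.factorial_succ, Nat.factorial_succ]
  have f3 : (m+1).factorial = (m+1) * m.factorial := Nat.factorial_succ _
  rw [f1, f3]
  have hm : ((m.factorial : ℂ)) ≠ 0 := Nat.cast_ne_zero.mpr (Nat.factorial_ne_zero _)
  have ha : (((2*m).factorial : ℂ)) ≠ 0 := Nat.cast_ne_zero.mpr (Nat.factorial_ne_zero _)
  have hm1 : ((m:ℂ)+1) ≠ 0 := Nat.cast_add_one_ne_zero m
  push_cast
  field_simp

open Finset in
private lemma wick_sum_rec {M : Type*} [Ring M] [Algebra ℂ M] (Φ : M) (c : ℂ) (n : ℕ) :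
    (∑ k ∈ range ((n+2)/2+1), (Acoef (n+2) k * c^k) • Φ^(n+2-2*k))
    = Φ * (∑ k ∈ range ((n+1)/2+1), (Acoef (n+1) k * c^k) • Φ^(n+1-2*k))
      + (2*((n:ℂ)+1)*c) • (∑ k ∈ range (n/2+1), (Acoef n k * c^k) • Φ^(n-2*k)) := by
  obtain ⟨m, rfl | rfl⟩ := Nat.even_or_odd' n
  · -- n = 2*m
    rw [show (2*m+2)/2+1 = m+2 from by omega, show (2*m+1)/2+1 = m+1 from by omega,
      show (2*m)/2+1 = m+1 from by omega, Finset.mul_sum, Finset.smul_sum]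
    have h1 : ∀ k ∈ range (m+1),
        Φ * ((Acoef (2*m+1) k * c^k) • Φ^(2*m+1-2*k))
          = (Acoef (2*m+1) k * c^k) • Φ^(2*m+2-2*k) := by
      intro k hk
      have hk' := Finset.mem_range.mp hk
      rw [mul_smul_comm, ← pow_succ', show 2*m+1-2*k+1 = 2*m+2-2*k from by omega]
    have h2 : ∀ k ∈ range (m+1),
        (2*(((2*m:ℕ):ℂ)+1)*c) • ((Acoef (2*m) k * c^k) • Φ^(2*m-2*k))
          = ((2*(((2*m:ℕ):ℂ)+1)*Acoef (2*m) k) * c^(k+1)) • Φ^(2*m-2*k) := by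
      intro k hk
      rw [smul_smul]
      congr 1
      ring
    rw [Finset.sum_congr rfl h1, Finset.sum_congr rfl h2]
    rw [Finset.sum_range_succ']
    rw [Finset.sum_range_succ]
    rw [Finset.sum_range_succ']
    rw [Finset.sum_range_succ]
    have hmid : ∀ k ∈ range m,
        (Acoef (2*m+2) (k+1) * c^(k+1)) • Φ^(2*m+2-2*(k+1))
          = (Acoef (2*m+1) (k+1) * c^(k+1)) • Φ^(2*m+2-2*(k+1))
            + ((2*(((2*m:ℕ):ℂ)+1)*Acoef (2*m) k) * c^(k+1)) • Φ^(2*m-2*k) := by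
      intro k hk
      have hk' := Finset.mem_range.mp hk
      rw [Acoef_rec (2*m) k (by omega), add_mul, add_smul,
        show 2*m+2-2*(k+1) = 2*m-2*k from by omega]
    rw [Finset.sum_congr rfl hmid, Finset.sum_add_distrib, Acoef_zero, Acoef_zero,
      show 2*m+2-2*(m+1) = 2*m-2*m from by omega, Acoef_top]
    abel
  · -- n = 2*m+1
    rw [show (2*m+1+2)/2+1 = m+2 from by omega, show (2*m+1+1)/2+1 = m+2 from by omega,
      show (2*m+1)/2+1 = m+1 from by omega, Finset.mul_sum, Finset.smul_sum]
    have h1 : ∀ k ∈ range (m+2),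
        Φ * ((Acoef (2*m+1+1) k * c^k) • Φ^(2*m+1+1-2*k))
          = (Acoef (2*m+1+1) k * c^k) • Φ^(2*m+1+2-2*k) := by
      intro k hk
      have hk' := Finset.mem_range.mp hk
      rw [mul_smul_comm, ← pow_succ', show 2*m+1+1-2*k+1 = 2*m+1+2-2*k from by omega]
    have h2 : ∀ k ∈ range (m+1),
        (2*(((2*m+1:ℕ):ℂ)+1)*c) • ((Acoef (2*m+1) k * c^k) • Φ^(2*m+1-2*k))
          = ((2*(((2*m+1:ℕ):ℂ)+1)*Acoef (2*m+1) k) * c^(k+1)) • Φ^(2*m+1-2*k) := by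
      intro k hk
      rw [smul_smul]
      congr 1
      ring
    rw [Finset.sum_congr rfl h1, Finset.sum_congr rfl h2]
    rw [Finset.sum_range_succ' _ (m+1)]
    rw [Finset.sum_range_succ' _ (m+1)]
    have hmid : ∀ k ∈ range (m+1),
        (Acoef (2*m+1+2) (k+1) * c^(k+1)) • Φ^(2*m+1+2-2*(k+1))
          = (Acoef (2*m+1+1) (k+1) * c^(k+1)) • Φ^(2*m+1+2-2*(k+1))
            + ((2*(((2*m+1:ℕ):ℂ)+1)*Acoef (2*m+1) k) * c^(k+1)) • Φ^(2*m+1-2*k) := by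
      intro k hk
      have hk' := Finset.mem_range.mp hk
      rw [Acoef_rec (2*m+1) k (by omega), add_mul, add_smul,
        show 2*m+1+2-2*(k+1) = 2*m+1-2*k from by omega]
    rw [Finset.sum_congr rfl hmid, Finset.sum_add_distrib, Acoef_zero, Acoef_zero]
    abel


/-- The Wick-ordered power of a Segal field satisfies
`:Φ(f)ⁿ: = Σ_{k=0}^{[n/2]} n!/(k!(n-2k)!) Φ(f)^{n-2k} (-‖f‖²/4)ᵏ`
on the finite particle subspace.

Here `Φ = (1/√2)(a*(f̄) + a(f))` is the Segal field and the Wick powers `W n = :Φ(f)ⁿ:`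
are characterized by the recursion `:Φ(f):= Φ(f)` and
`:Φ(f)^{n+2}: = Φ(f):Φ(f)^{n+1}: - ((n+1)/2)(f,f):Φ(f)ⁿ:`, which is the specialization of
the recursive definition of the Wick product to equal arguments. -/
theorem wick_power_formula
    {𝓗 F : Type*} [NormedAddCommGroup 𝓗] [InnerProductSpace ℂ 𝓗]
    [NormedAddCommGroup F] [InnerProductSpace ℂ F]
    (conj : 𝓗 → 𝓗)
    (fin : Submodule ℂ F)
    (ann cre : 𝓗 →ₗ[ℂ] Module.End ℂ fin)
    (f : 𝓗)
    (Φ : Module.End ℂ fin)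
    (hΦ : Φ = (((Real.sqrt 2 : ℝ) : ℂ))⁻¹ • (cre (conj f) + ann f))
    (W : ℕ → Module.End ℂ fin)
    (hW0 : W 0 = 1)
    (hW1 : W 1 = Φ)
    (hWrec : ∀ n : ℕ,
      W (n + 2) = Φ * W (n + 1) - ((((n : ℂ) + 1) / 2) * ⟪f, f⟫) • W n) :
    ∀ n : ℕ, W n = ∑ k ∈ Finset.range (n / 2 + 1),
      ((n.factorial : ℂ) / ((k.factorial : ℂ) * ((n - 2 * k).factorial : ℂ))
        * (-(((‖f‖ : ℝ) : ℂ) ^ 2) / 4) ^ k) • Φ ^ (n - 2 * k) := by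
  have hc : ⟪f, f⟫ = (((‖f‖ : ℝ) : ℂ))^2 := inner_self_eq_norm_sq_to_K (𝕜 := ℂ) f
  have key : ∀ n : ℕ,
      W n = ∑ k ∈ Finset.range (n/2+1),
          (Acoef n k * (-(((‖f‖ : ℝ) : ℂ) ^ 2) / 4)^k) • Φ^(n-2*k)
      ∧ W (n+1) = ∑ k ∈ Finset.range ((n+1)/2+1),
          (Acoef (n+1) k * (-(((‖f‖ : ℝ) : ℂ) ^ 2) / 4)^k) • Φ^((n+1)-2*k) := by
    intro n
    induction n with
    | zero =>
      constructor
      · rw [hW0]; simp [Acoef_zero]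
      · rw [hW1]; simp [Acoef_zero]
    | succ n ih =>
      refine ⟨ih.2, ?_⟩
      show W (n+2) = ∑ k ∈ Finset.range ((n+2)/2+1),
        (Acoef (n+2) k * (-(((‖f‖ : ℝ) : ℂ) ^ 2) / 4)^k) • Φ^((n+2)-2*k)
      rw [hWrec n, ih.1, ih.2, hc, wick_sum_rec Φ (-(((‖f‖ : ℝ) : ℂ) ^ 2) / 4) n]
      have hscal : (((n:ℂ)+1)/2) * (((‖f‖ : ℝ) : ℂ))^2
          = -(2*((n:ℂ)+1)*(-(((‖f‖ : ℝ) : ℂ) ^ 2) / 4)) := by ring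
      rw [hscal]
      module
  intro n
  rw [(key n).1]
  rfl
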